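/- Let ℓ, γ, m ∈ ℕ with γ ≥ 1, and identify the state space with (ℝ^ℓ)^γ, writing x = (ζ₁,…,ζ_γ). Let f_γ : (ℝ^ℓ)^γ → ℝ^ℓ and g_γ : (ℝ^ℓ)^γ → Matrix (Fin ℓ) (Fin m) ℝ, and define the controlled vector field V(x,u) ∈ (ℝ^ℓ)^γ by V(x,u)_i = ζ_{i+1} for 1 ≤ i ≤ γ−1 and V(x,u)_γ = f_γ(x) + g_γ(x)·u. Let q ∈ ℕ with 1 ≤ q ≤ γ and set p = γ − q + 1. Fix h > 0, weights b₁,…,b_p ∈ ℝ with Σᵢ bᵢ = 1, and coefficients a_{i,j} ∈ ℝ (1 ≤ j < i ≤ p), and define the Runge–Kutta map F^{a,p}_h(x,u) = x + h Σ_{i=1}^{p} bᵢ V(zᵢ,u) with z₁ = x and zᵢ = x + h Σ_{j=1}^{i−1} a_{i,j} V(z_j,u). Let s̃ : (ℝ^ℓ)^q → ℝ be such that for every fixed (ζ₁,…,ζ_{q−1}) the map ζ ↦ s̃(ζ₁,…,ζ_{q−1},ζ) is concave, and set s(x) = s̃(ζ₁,…,ζ_q). Then for every function α : ℝ → ℝ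 and every x ∈ (ℝ^ℓ)^γ, the map u ↦ −s(F^{a,p}_h(x,u)) + s(x) − h·α(s(x)) is convex on ℝᵐ. -/

import Mathlib

/-- Matrix–vector multiplication as a map between Euclidean spaces. -/
noncomputable def mulVecE {n m : ℕ} (g : Matrix (Fin n) (Fin m) ℝ)
    (u : EuclideanSpace ℝ (Fin m)) : EuclideanSpace ℝ (Fin n) :=
  (WithLp.equiv 2 (Fin n → ℝ)).symm (g.mulVec ((WithLp.equiv 2 (Fin m → ℝ)) u))

/-- The controlled block chain-of-integrators vector field:
`V(x,u)_i = x_{i+1}` for `i < γ−1` and `V(x,u)_{γ−1} = f_γ(x) + g_γ(x)·u` (0-indexed). -/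
noncomputable def chainVF {ℓ γ m : ℕ}
    (fγ : (Fin γ → EuclideanSpace ℝ (Fin ℓ)) → EuclideanSpace ℝ (Fin ℓ))
    (gγ : (Fin γ → EuclideanSpace ℝ (Fin ℓ)) → Matrix (Fin ℓ) (Fin m) ℝ)
    (x : Fin γ → EuclideanSpace ℝ (Fin ℓ)) (u : EuclideanSpace ℝ (Fin m)) :
    Fin γ → EuclideanSpace ℝ (Fin ℓ) :=
  fun i => if hi : (i : ℕ) + 1 < γ then x ⟨(i : ℕ) + 1, hi⟩ else fγ x + mulVecE (gγ x) u

/-- Runge–Kutta stage points (0-indexed): `z 0 = x`,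
`z i = x + h • Σ_{j<i} a i j • v j (z j)`. -/
noncomputable def rkStages {S : Type*} [AddCommGroup S] [Module ℝ S]
    (v : ℕ → S → S) (a : ℕ → ℕ → ℝ) (h : ℝ) (x : S) : ℕ → S :=
  fun i => Nat.strongRecOn i fun i ih =>
    x + h • ∑ j ∈ (Finset.range i).attach, a i j.1 • v j.1 (ih j.1 (Finset.mem_range.mp j.2))

/-- The `p`-stage Runge–Kutta map for the block chain-of-integrators dynamics. -/
noncomputable def rkMapChain {ℓ γ m : ℕ}
    (fγ : (Fin γ → EuclideanSpace ℝ (Fin ℓ)) → EuclideanSpace ℝ (Fin ℓ))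
    (gγ : (Fin γ → EuclideanSpace ℝ (Fin ℓ)) → Matrix (Fin ℓ) (Fin m) ℝ)
    (p : ℕ) (b : ℕ → ℝ) (a : ℕ → ℕ → ℝ) (h : ℝ)
    (x : Fin γ → EuclideanSpace ℝ (Fin ℓ)) (u : EuclideanSpace ℝ (Fin m)) :
    Fin γ → EuclideanSpace ℝ (Fin ℓ) :=
  x + h • ∑ i ∈ Finset.range p,
    b i • chainVF fγ gγ (rkStages (fun _ z => chainVF fγ gγ z u) a h x i) u

/-- Matrix–vector multiplication as a linear map between Euclidean spaces. -/
noncomputable def mulVecL {n m : ℕ} (g : Matrix (Fin n) (Fin m) ℝ) :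
    EuclideanSpace ℝ (Fin m) →ₗ[ℝ] EuclideanSpace ℝ (Fin n) :=
  (WithLp.linearEquiv 2 ℝ (Fin n → ℝ)).symm.toLinearMap ∘ₗ g.mulVecLin ∘ₗ
    (WithLp.linearEquiv 2 ℝ (Fin m → ℝ)).toLinearMap

lemma mulVecE_eq_mulVecL {n m : ℕ} (g : Matrix (Fin n) (Fin m) ℝ)
    (u : EuclideanSpace ℝ (Fin m)) : mulVecE g u = mulVecL g u := rfl

lemma rkStages_eq {S : Type*} [AddCommGroup S] [Module ℝ S]
    (v : ℕ → S → S) (a : ℕ → ℕ → ℝ) (h : ℝ) (x : S) (i : ℕ) :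
    rkStages v a h x i =
      x + h • ∑ j ∈ (Finset.range i).attach, a i j.1 • v j.1 (rkStages v a h x j.1) := by
  unfold rkStages
  rw [Nat.strongRecOn_eq]

lemma rkStages_zero {S : Type*} [AddCommGroup S] [Module ℝ S]
    (v : ℕ → S → S) (a : ℕ → ℕ → ℝ) (h : ℝ) (x : S) :
    rkStages v a h x 0 = x := by
  rw [rkStages_eq]; simp

section Aux

variable {ℓ γ m : ℕ}
  (fγ : (Fin γ → EuclideanSpace ℝ (Fin ℓ)) → EuclideanSpace ℝ (Fin ℓ))
  (gγ : (Fin γ → EuclideanSpace ℝ (Fin ℓ)) → Matrix (Fin ℓ) (Fin m) ℝ)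
  (a : ℕ → ℕ → ℝ) (h : ℝ) (x : Fin γ → EuclideanSpace ℝ (Fin ℓ))

/-- Blocks `k` with `i + k < γ` of the `i`-th stage do not depend on `u`. -/
lemma stageIndep : ∀ i : ℕ, ∀ k : Fin γ, i + (k : ℕ) < γ →
    ∀ u u' : EuclideanSpace ℝ (Fin m),
      rkStages (fun _ z => chainVF fγ gγ z u) a h x i k =
      rkStages (fun _ z => chainVF fγ gγ z u') a h x i k := by
  intro i
  induction i using Nat.strong_induction_on with
  | _ i IH =>
    intro k hk u u'
    rw [rkStages_eq, rkStages_eq]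
    simp only [Pi.add_apply, Pi.smul_apply, Finset.sum_apply]
    congr 2
    refine Finset.sum_congr rfl fun j _ => ?_
    have hj' : j.1 < i := Finset.mem_range.mp j.2
    have hk1 : (k : ℕ) + 1 < γ := by omega
    simp only [Pi.smul_apply, chainVF, dif_pos hk1]
    rw [IH j.1 hj' ⟨(k : ℕ) + 1, hk1⟩ (show j.1 + ((k : ℕ) + 1) < γ by omega) u u']

/-- Blocks `k` with `i + k ≤ γ` of the `i`-th stage are affine in `u`. -/
lemma stageAffine : ∀ i : ℕ, ∀ k : Fin γ, i + (k : ℕ) ≤ γ →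
    ∃ (c : EuclideanSpace ℝ (Fin ℓ))
      (L : EuclideanSpace ℝ (Fin m) →ₗ[ℝ] EuclideanSpace ℝ (Fin ℓ)),
      ∀ u, rkStages (fun _ z => chainVF fγ gγ z u) a h x i k = c + L u := by
  intro i
  induction i using Nat.strong_induction_on with
  | _ i IH =>
    intro k hk
    have hterm : ∀ j ∈ Finset.range i, ∃ (c : EuclideanSpace ℝ (Fin ℓ))
        (L : EuclideanSpace ℝ (Fin m) →ₗ[ℝ] EuclideanSpace ℝ (Fin ℓ)),
        ∀ u, chainVF fγ gγ (rkStages (fun _ z => chainVF fγ gγ z u) a h x j) u k = c + L u := by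
      intro j hj
      have hj' : j < i := Finset.mem_range.mp hj
      by_cases hk1 : (k : ℕ) + 1 < γ
      · obtain ⟨c, L, hcL⟩ := IH j hj' ⟨(k : ℕ) + 1, hk1⟩ (show j + ((k : ℕ) + 1) ≤ γ by omega)
        exact ⟨c, L, fun u => by simp only [chainVF, dif_pos hk1, hcL u]⟩
      · have hj0 : j = 0 := by omega
        subst hj0
        refine ⟨fγ x, mulVecL (gγ x), fun u => ?_⟩
        simp only [chainVF, dif_neg hk1, rkStages_zero, mulVecE_eq_mulVecL]
    choose c L hcL using hterm
    refine ⟨x k + h • ∑ j ∈ (Finset.range i).attach, a i j.1 • c j.1 j.2,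
      h • ∑ j ∈ (Finset.range i).attach, a i j.1 • L j.1 j.2, fun u => ?_⟩
    rw [rkStages_eq]
    simp only [Pi.add_apply, Pi.smul_apply, Finset.sum_apply, LinearMap.smul_apply,
      LinearMap.sum_apply]
    have : ∀ j ∈ (Finset.range i).attach,
        a i j.1 • chainVF fγ gγ (rkStages (fun _ z => chainVF fγ gγ z u) a h x j.1) u k =
          a i j.1 • c j.1 j.2 + a i j.1 • L j.1 j.2 u := by
      intro j _
      rw [hcL j.1 j.2 u, smul_add]
    rw [Finset.sum_congr rfl this, Finset.sum_add_distrib, smul_add, add_assoc]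

end Aux

theorem stmt5 {ℓ γ m : ℕ} (hγ : 1 ≤ γ)
    (fγ : (Fin γ → EuclideanSpace ℝ (Fin ℓ)) → EuclideanSpace ℝ (Fin ℓ))
    (gγ : (Fin γ → EuclideanSpace ℝ (Fin ℓ)) → Matrix (Fin ℓ) (Fin m) ℝ)
    (q : ℕ) (hq1 : 1 ≤ q) (hqγ : q ≤ γ) (p : ℕ) (hpdef : p = γ - q + 1)
    (h : ℝ) (hh : 0 < h)
    (b : ℕ → ℝ) (hbsum : ∑ i ∈ Finset.range p, b i = 1) (a : ℕ → ℕ → ℝ)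
    (st : (Fin q → EuclideanSpace ℝ (Fin ℓ)) → ℝ)
    (hconc : ∀ w : Fin q → EuclideanSpace ℝ (Fin ℓ),
      ConcaveOn ℝ Set.univ
        (fun ζ : EuclideanSpace ℝ (Fin ℓ) =>
          st (Function.update w ⟨q - 1, by omega⟩ ζ)))
    (s : (Fin γ → EuclideanSpace ℝ (Fin ℓ)) → ℝ)
    (hs : ∀ x : Fin γ → EuclideanSpace ℝ (Fin ℓ),
      s x = st (fun j => x (Fin.castLE hqγ j)))
    (α : ℝ → ℝ) (x : Fin γ → EuclideanSpace ℝ (Fin ℓ)) :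
    ConvexOn ℝ Set.univ
      (fun u : EuclideanSpace ℝ (Fin m) =>
        -s (rkMapChain fγ gγ p b a h x u) + s x - h * α (s x)) := by
  set F : EuclideanSpace ℝ (Fin m) → Fin γ → EuclideanSpace ℝ (Fin ℓ) :=
    fun u => rkMapChain fγ gγ p b a h x u with hF
  -- per-term analysis of the RK map
  have hterm : ∀ (k : Fin γ), (k : ℕ) < q → ∀ i ∈ Finset.range p,
      ∃ (c : EuclideanSpace ℝ (Fin ℓ))
        (L : EuclideanSpace ℝ (Fin m) →ₗ[ℝ] EuclideanSpace ℝ (Fin ℓ)),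
        ∀ u, chainVF fγ gγ (rkStages (fun _ z => chainVF fγ gγ z u) a h x i) u k = c + L u := by
    intro k hkq i hi
    have hi' : i < p := Finset.mem_range.mp hi
    by_cases hk1 : (k : ℕ) + 1 < γ
    · obtain ⟨c, L, hcL⟩ := stageAffine fγ gγ a h x i ⟨(k : ℕ) + 1, hk1⟩ (show i + ((k : ℕ) + 1) ≤ γ by omega)
      exact ⟨c, L, fun u => by simp only [chainVF, dif_pos hk1, hcL u]⟩
    · have hi0 : i = 0 := by omega
      subst hi0
      refine ⟨fγ x, mulVecL (gγ x), fun u => ?_⟩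
      simp only [chainVF, dif_neg hk1, rkStages_zero, mulVecE_eq_mulVecL]
  -- block `k < q` of the RK map is affine in `u`
  have hblockAffine : ∀ (k : Fin γ), (k : ℕ) < q →
      ∃ (c : EuclideanSpace ℝ (Fin ℓ))
        (L : EuclideanSpace ℝ (Fin m) →ₗ[ℝ] EuclideanSpace ℝ (Fin ℓ)),
        ∀ u, F u k = c + L u := by
    intro k hkq
    choose c L hcL using hterm k hkq
    refine ⟨x k + h • ∑ i ∈ (Finset.range p).attach, b i.1 • c i.1 i.2,
      h • ∑ i ∈ (Finset.range p).attach, b i.1 • L i.1 i.2, fun u => ?_⟩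
    have : F u k = x k + h • ∑ i ∈ (Finset.range p).attach,
        b i.1 • chainVF fγ gγ (rkStages (fun _ z => chainVF fγ gγ z u) a h x i.1) u k := by
      rw [hF]
      simp only [rkMapChain, Pi.add_apply, Pi.smul_apply, Finset.sum_apply,
        ← Finset.sum_attach (Finset.range p)
          (fun i => b i • chainVF fγ gγ (rkStages (fun _ z => chainVF fγ gγ z u) a h x i) u k)]
    rw [this]
    simp only [LinearMap.smul_apply, LinearMap.sum_apply]
    have h2 : ∀ i ∈ (Finset.range p).attach,
        b i.1 • chainVF fγ gγ (rkStages (fun _ z => chainVF fγ gγ z u) a h x i.1) u k =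
          b i.1 • c i.1 i.2 + b i.1 • L i.1 i.2 u := by
      intro i _
      rw [hcL i.1 i.2 u, smul_add]
    rw [Finset.sum_congr rfl h2, Finset.sum_add_distrib, smul_add, add_assoc]
  -- blocks `k` with `k + 1 < q` do not depend on `u`
  have hblockIndep : ∀ (k : Fin γ), (k : ℕ) + 1 < q → ∀ u u', F u k = F u' k := by
    intro k hkq u u'
    rw [hF]
    simp only [rkMapChain, Pi.add_apply, Pi.smul_apply, Finset.sum_apply]
    congr 2
    refine Finset.sum_congr rfl fun i hi => ?_
    have hi' : i < p := Finset.mem_range.mp hi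
    have hk1 : (k : ℕ) + 1 < γ := by omega
    simp only [Pi.smul_apply, chainVF, dif_pos hk1]
    rw [stageIndep fγ gγ a h x i ⟨(k : ℕ) + 1, hk1⟩ (show i + ((k : ℕ) + 1) < γ by omega) u u']
  obtain ⟨c, L, hcL⟩ := hblockAffine ⟨q - 1, by omega⟩ (show q - 1 < q by omega)
  -- the composite index map
  set w₀ : Fin q → EuclideanSpace ℝ (Fin ℓ) := fun j => F 0 (Fin.castLE hqγ j) with hw₀
  have key : ∀ u, (fun j : Fin q => F u (Fin.castLE hqγ j)) =
      Function.update w₀ ⟨q - 1, by omega⟩ (c + L u) := by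
    intro u
    funext j
    by_cases hj : j = ⟨q - 1, by omega⟩
    · subst hj
      rw [Function.update_self]
      have : Fin.castLE hqγ (⟨q - 1, by omega⟩ : Fin q) = ⟨q - 1, by omega⟩ := rfl
      rw [this]
      exact hcL u
    · rw [Function.update_of_ne hj, hw₀]
      have hjq : (j : ℕ) + 1 < q := by
        have h2 := j.2
        have h3 : (j : ℕ) ≠ q - 1 := fun hc => hj (Fin.ext hc)
        omega
      exact hblockIndep (Fin.castLE hqγ j) hjq u 0
  -- build the affine map
  set A : EuclideanSpace ℝ (Fin m) →ᵃ[ℝ] EuclideanSpace ℝ (Fin ℓ) :=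
    { toFun := fun u => c + L u
      linear := L
      map_vadd' := by
        intro pt v
        simp only [vadd_eq_add, LinearMap.map_add]
        abel } with hA
  have hcomp : ConcaveOn ℝ Set.univ (fun u : EuclideanSpace ℝ (Fin m) => s (F u)) := by
    have h1 := (hconc w₀).comp_affineMap A
    have h2 : A ⁻¹' Set.univ = Set.univ := Set.preimage_univ
    rw [h2] at h1
    convert h1 using 1
    any_goals rfl
    funext u
    simp only [Function.comp_apply]
    rw [hs (F u)]
    have hAu : A u = c + L u := rfl
    rw [hAu] at *
    congr 1
    exact key u
  have hneg : ConvexOn ℝ Set.univ (fun u : EuclideanSpace ℝ (Fin m) => -s (F u)) := by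
    have h1 := hcomp.neg
    have h2 : (-fun u : EuclideanSpace ℝ (Fin m) => s (F u)) =
        (fun u : EuclideanSpace ℝ (Fin m) => -s (F u)) := rfl
    rwa [h2] at h1
  have heq : (fun u : EuclideanSpace ℝ (Fin m) =>
      -s (rkMapChain fγ gγ p b a h x u) + s x - h * α (s x)) =
      fun u => -s (F u) + (s x - h * α (s x)) := by
    funext u
    rw [hF]
    ring
  rw [heq]
  exact hneg.add_const _
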